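/- If u : Ω → ℝ is differentiable with u(x₀) = ‖u‖_∞ and satisfies |∇u(x)| ≤ 2√(‖u‖_∞ - u(x)) for all x ∈ Ω (Ω convex), then for every x ∈ Ω, ‖u‖_∞ ≤ ‖x - x₀‖² + u(x). -/

import Mathlib

open Real

/-- If `u` is differentiable on a convex `Ω ⊂ ℝ²`, attains its maximum at `x₀ ∈ Ω`,
and satisfies `|∇u(x)| ≤ 2√(‖u‖_∞ - u(x))` on `Ω`, then for every `x ∈ Ω`,
`‖u‖_∞ ≤ ‖x - x₀‖² + u(x)`. -/
theorem max_bound_from_gradient_bound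
    (Ω : Set (EuclideanSpace ℝ (Fin 2))) (hConv : Convex ℝ Ω)
    (u : EuclideanSpace ℝ (Fin 2) → ℝ)
    (hdiff : ∀ x ∈ Ω, DifferentiableAt ℝ u x)
    (x₀ : EuclideanSpace ℝ (Fin 2)) (hx₀ : x₀ ∈ Ω)
    (hmax : ∀ x ∈ Ω, u x ≤ u x₀)
    (hgrad : ∀ x ∈ Ω, ‖fderiv ℝ u x‖ ≤ 2 * Real.sqrt (u x₀ - u x)) :
    ∀ x ∈ Ω, u x₀ ≤ ‖x - x₀‖ ^ 2 + u x := by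
  intro x hx
  set d : ℝ := ‖x - x₀‖ with hd
  have hd0 : 0 ≤ d := norm_nonneg _
  set M : ℝ := u x₀ with hM
  set γ : ℝ → EuclideanSpace ℝ (Fin 2) := fun t => x₀ + t • (x - x₀) with hγ
  have hγmem : ∀ t ∈ Set.Icc (0:ℝ) 1, γ t ∈ Ω := by
    intro t ht
    have h := hConv hx₀ hx (by linarith [ht.2] : (0:ℝ) ≤ 1 - t) ht.1 (by ring)
    have : (1 - t) • x₀ + t • x = γ t := by
      simp only [hγ, smul_sub, sub_smul, one_smul]
      abel
    rwa [this] at h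
  have hγd : ∀ t : ℝ, HasDerivAt γ (x - x₀) t := by
    intro t
    have h := ((hasDerivAt_id t).smul_const (x - x₀)).const_add x₀
    rw [one_smul] at h
    exact h
  set f : ℝ → ℝ := fun t => u (γ t) with hf
  have key : ∀ ε : ℝ, 0 < ε → M - u x ≤ 2 * Real.sqrt ε * d + d ^ 2 := by
    intro ε hε
    set ψ : ℝ → ℝ := fun t => Real.sqrt (M + ε - f t) with hψ
    set ψ' : ℝ → ℝ := fun t =>
      (1 / (2 * Real.sqrt (M + ε - f t))) * (-(fderiv ℝ u (γ t)) (x - x₀)) with hψ'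
    have hfM : ∀ t ∈ Set.Icc (0:ℝ) 1, f t ≤ M := fun t ht => hmax _ (hγmem t ht)
    have hpos : ∀ t ∈ Set.Icc (0:ℝ) 1, 0 < M + ε - f t := by
      intro t ht; have := hfM t ht; linarith
    have hderiv : ∀ t ∈ Set.Icc (0:ℝ) 1, HasDerivWithinAt ψ (ψ' t) (Set.Icc (0:ℝ) 1) t := by
      intro t ht
      have hud := (hdiff _ (hγmem t ht)).hasFDerivAt
      have hfd : HasDerivAt f ((fderiv ℝ u (γ t)) (x - x₀)) t :=
        hud.comp_hasDerivAt t (hγd t)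
      have hin : HasDerivAt (fun s => M + ε - f s) (-(fderiv ℝ u (γ t)) (x - x₀)) t := by
        have h := (hasDerivAt_const t (M + ε)).sub hfd
        rw [zero_sub] at h
        exact h
      have hs := (Real.hasDerivAt_sqrt (hpos t ht).ne').comp t hin
      exact hs.hasDerivWithinAt
    have hbound : ∀ t ∈ Set.Icc (0:ℝ) 1, ‖ψ' t‖ ≤ d := by
      intro t ht
      have hmem := hγmem t ht
      have h1 : |(fderiv ℝ u (γ t)) (x - x₀)| ≤ 2 * Real.sqrt (M - f t) * d := by
        calc |(fderiv ℝ u (γ t)) (x - x₀)| ≤ ‖fderiv ℝ u (γ t)‖ * ‖x - x₀‖ :=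
              (fderiv ℝ u (γ t)).le_opNorm _
          _ ≤ 2 * Real.sqrt (M - f t) * d :=
              mul_le_mul_of_nonneg_right (hgrad _ hmem) hd0
      have hsq : Real.sqrt (M - f t) ≤ Real.sqrt (M + ε - f t) :=
        Real.sqrt_le_sqrt (by linarith)
      have hψpos : 0 < Real.sqrt (M + ε - f t) := Real.sqrt_pos.mpr (hpos t ht)
      rw [hψ', Real.norm_eq_abs, abs_mul, abs_neg]
      have h2 : |1 / (2 * Real.sqrt (M + ε - f t))| = 1 / (2 * Real.sqrt (M + ε - f t)) := by
        rw [abs_of_pos]; positivity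
      rw [h2]
      rw [div_mul_eq_mul_div, one_mul, div_le_iff₀ (by positivity)]
      calc |(fderiv ℝ u (γ t)) (x - x₀)| ≤ 2 * Real.sqrt (M - f t) * d := h1
        _ ≤ 2 * Real.sqrt (M + ε - f t) * d :=
            mul_le_mul_of_nonneg_right (by nlinarith [Real.sqrt_nonneg (M - f t)]) hd0
        _ = d * (2 * Real.sqrt (M + ε - f t)) := by ring
    have hmv := (convex_Icc (0:ℝ) 1).norm_image_sub_le_of_norm_hasDerivWithin_le
      hderiv hbound (Set.mem_Icc.mpr ⟨le_refl 0, zero_le_one⟩)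
      (Set.mem_Icc.mpr ⟨zero_le_one, le_refl 1⟩)
    have hψ1 : ψ 1 = Real.sqrt (M + ε - u x) := by
      simp [hψ, hf, hγ]
    have hψ0 : ψ 0 = Real.sqrt ε := by
      simp [hψ, hf, hγ, hM]
    have hdiff1 : ψ 1 - ψ 0 ≤ d := by
      have := abs_le.mp (by simpa [Real.norm_eq_abs] using hmv)
      linarith [this.2]
    have hle : Real.sqrt (M + ε - u x) ≤ Real.sqrt ε + d := by
      rw [← hψ1, ← hψ0]; linarith
    have hxΩ : u x ≤ M := hmax x hx
    have h3 : M + ε - u x ≤ (Real.sqrt ε + d) ^ 2 := by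
      have := Real.sq_sqrt (by linarith : (0:ℝ) ≤ M + ε - u x)
      nlinarith [Real.sqrt_nonneg (M + ε - u x), Real.sqrt_nonneg ε]
    have hse : Real.sqrt ε ^ 2 = ε := Real.sq_sqrt hε.le
    nlinarith
  have : M - u x ≤ d ^ 2 := by
    refine le_of_forall_pos_le_add ?_
    intro δ hδ
    have hεpos : 0 < (δ / (2 * (d + 1))) ^ 2 := by positivity
    have h := key _ hεpos
    have hs : Real.sqrt ((δ / (2 * (d + 1))) ^ 2) = δ / (2 * (d + 1)) := by
      rw [Real.sqrt_sq (by positivity)]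
    rw [hs] at h
    have : 2 * (δ / (2 * (d + 1))) * d ≤ δ := by
      have heq : 2 * (δ / (2 * (d + 1))) * d = δ * d / (d + 1) := by
        field_simp
      rw [heq, div_le_iff₀ (by positivity)]
      nlinarith
    linarith
  linarith
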